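/- Let Ω > 0, T > 0 and t ∈ [0, T]. Define G(t, s) := [sinh(2Ωt)·sinh(2Ω(T − s)) − (if s ≤ t then sinh(2ΩT)·sinh(2Ω(t − s)) else 0)]/(Ω·sinh(2ΩT)). Then ∫₀ᵀ G(t, s) ds = sinh(Ω(T − t))·sinh(Ωt)/(Ω²·cosh(ΩT)). -/

import Mathlib

open Real intervalIntegral

lemma aux_sinh_int (c d a b : ℝ) (hc : c ≠ 0) :
    ∫ s in a..b, Real.sinh (c * (d - s)) =
      (Real.cosh (c * (d - a)) - Real.cosh (c * (d - b))) / c := by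
  have key : ∀ s : ℝ, HasDerivAt (fun s => -(Real.cosh (c * (d - s))) / c)
      (Real.sinh (c * (d - s))) s := by
    intro s
    have h1 : HasDerivAt (fun s : ℝ => d - s) (-1) s := (hasDerivAt_id s).const_sub d
    have h2 : HasDerivAt (fun s : ℝ => c * (d - s)) (c * -1) s := h1.const_mul c
    have h3 := (Real.hasDerivAt_cosh (c * (d - s))).comp s h2
    have h4 := (h3.neg).div_const c
    refine h4.congr_deriv ?_
    field_simp
  have hcont : Continuous fun s => Real.sinh (c * (d - s)) :=
    Real.continuous_sinh.comp (continuous_const.mul (continuous_const.sub continuous_id))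
  rw [intervalIntegral.integral_eq_sub_of_hasDerivAt (fun s _ => key s)
      (hcont.intervalIntegrable a b)]
  ring

theorem integral_dirichlet_green_function (Ω T t : ℝ) (hΩ : 0 < Ω) (hT : 0 < T)
    (ht : t ∈ Set.Icc 0 T) :
    (∫ s in (0 : ℝ)..T,
        (Real.sinh (2 * Ω * t) * Real.sinh (2 * Ω * (T - s)) -
            (if s ≤ t then Real.sinh (2 * Ω * T) * Real.sinh (2 * Ω * (t - s)) else 0)) /
          (Ω * Real.sinh (2 * Ω * T))) =
      Real.sinh (Ω * (T - t)) * Real.sinh (Ω * t) / (Ω ^ 2 * Real.cosh (Ω * T)) := by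
  obtain ⟨ht0, htT⟩ := ht
  have hc : (2 * Ω) ≠ 0 := by positivity
  have hsT : 0 < Real.sinh (2 * Ω * T) := Real.sinh_pos_iff.2 (by positivity)
  have hD : Ω * Real.sinh (2 * Ω * T) ≠ 0 := by positivity
  set F : ℝ → ℝ := fun s =>
      (Real.sinh (2 * Ω * t) * Real.sinh (2 * Ω * (T - s)) -
          (if s ≤ t then Real.sinh (2 * Ω * T) * Real.sinh (2 * Ω * (t - s)) else 0)) /
        (Ω * Real.sinh (2 * Ω * T)) with hF
  have hcont : Continuous F := by
    apply Continuous.div_const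
    apply Continuous.sub
    · exact continuous_const.mul (Real.continuous_sinh.comp (continuous_const.mul (continuous_const.sub continuous_id)))
    · apply Continuous.if_le
        (continuous_const.mul (Real.continuous_sinh.comp (continuous_const.mul (continuous_const.sub continuous_id)))) continuous_const
        continuous_id continuous_const
      intro s hs
      simp only [id] at hs
      subst hs
      simp
  have hsplit : (∫ s in (0:ℝ)..t, F s) + (∫ s in t..T, F s) = ∫ s in (0:ℝ)..T, F s :=
    intervalIntegral.integral_add_adjacent_intervals
      (hcont.intervalIntegrable _ _) (hcont.intervalIntegrable _ _)
  rw [← hsplit]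
  have h1 : (∫ s in (0:ℝ)..t, F s) =
      ∫ s in (0:ℝ)..t, (Real.sinh (2 * Ω * t) * Real.sinh (2 * Ω * (T - s)) -
          Real.sinh (2 * Ω * T) * Real.sinh (2 * Ω * (t - s))) / (Ω * Real.sinh (2 * Ω * T)) := by
    apply intervalIntegral.integral_congr
    intro s hs
    rw [Set.uIcc_of_le ht0] at hs
    simp [hF, hs.2]
  have h2 : (∫ s in t..T, F s) =
      ∫ s in t..T, (Real.sinh (2 * Ω * t) * Real.sinh (2 * Ω * (T - s))) /
        (Ω * Real.sinh (2 * Ω * T)) := by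
    apply intervalIntegral.integral_congr
    intro s hs
    rw [Set.uIcc_of_le htT] at hs
    rcases eq_or_lt_of_le hs.1 with h | h
    · simp [hF, ← h]
    · simp [hF, not_le.2 h]
  rw [h1, h2]
  have e1 : ∀ a b : ℝ, (∫ s in a..b, (Real.sinh (2 * Ω * t) * Real.sinh (2 * Ω * (T - s))) /
      (Ω * Real.sinh (2 * Ω * T))) =
      Real.sinh (2 * Ω * t) * ((Real.cosh (2 * Ω * (T - a)) - Real.cosh (2 * Ω * (T - b))) / (2 * Ω))
        / (Ω * Real.sinh (2 * Ω * T)) := by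
    intro a b
    rw [intervalIntegral.integral_div, intervalIntegral.integral_const_mul, aux_sinh_int _ _ _ _ hc]
  have e2 : (∫ s in (0:ℝ)..t, (Real.sinh (2 * Ω * T) * Real.sinh (2 * Ω * (t - s))) /
      (Ω * Real.sinh (2 * Ω * T))) =
      Real.sinh (2 * Ω * T) * ((Real.cosh (2 * Ω * (t - 0)) - Real.cosh (2 * Ω * (t - t))) / (2 * Ω))
        / (Ω * Real.sinh (2 * Ω * T)) := by
    rw [intervalIntegral.integral_div, intervalIntegral.integral_const_mul, aux_sinh_int _ _ _ _ hc]
  have split2 : (∫ s in (0:ℝ)..t, (Real.sinh (2 * Ω * t) * Real.sinh (2 * Ω * (T - s)) -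
          Real.sinh (2 * Ω * T) * Real.sinh (2 * Ω * (t - s))) / (Ω * Real.sinh (2 * Ω * T))) =
      (∫ s in (0:ℝ)..t, (Real.sinh (2 * Ω * t) * Real.sinh (2 * Ω * (T - s))) /
        (Ω * Real.sinh (2 * Ω * T))) -
      (∫ s in (0:ℝ)..t, (Real.sinh (2 * Ω * T) * Real.sinh (2 * Ω * (t - s))) /
        (Ω * Real.sinh (2 * Ω * T))) := by
    rw [← intervalIntegral.integral_sub]
    · congr 1; ext s; ring
    · exact ((continuous_const.mul (Real.continuous_sinh.comp (continuous_const.mul (continuous_const.sub continuous_id)))).div_const _).intervalIntegrable _ _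
    · exact ((continuous_const.mul (Real.continuous_sinh.comp (continuous_const.mul (continuous_const.sub continuous_id)))).div_const _).intervalIntegrable _ _
  rw [split2, e1, e1, e2]
  -- now pure algebra
  have hct : 0 < Real.cosh (Ω * T) := Real.cosh_pos _
  have hsOT : 0 < Real.sinh (Ω * T) := Real.sinh_pos_iff.2 (by positivity)
  have d1 : Real.sinh (2 * Ω * t) = 2 * Real.sinh (Ω * t) * Real.cosh (Ω * t) := by
    rw [show 2 * Ω * t = 2 * (Ω * t) by ring, Real.sinh_two_mul]
  have d2 : Real.sinh (2 * Ω * T) = 2 * Real.sinh (Ω * T) * Real.cosh (Ω * T) := by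
    rw [show 2 * Ω * T = 2 * (Ω * T) by ring, Real.sinh_two_mul]
  have d3 : Real.cosh (2 * Ω * t) = 2 * Real.cosh (Ω * t) ^ 2 - 1 := by
    rw [show 2 * Ω * t = 2 * (Ω * t) by ring, Real.cosh_two_mul]
    have := Real.cosh_sq (Ω * t); linarith
  have d4 : Real.cosh (2 * Ω * T) = 2 * Real.cosh (Ω * T) ^ 2 - 1 := by
    rw [show 2 * Ω * T = 2 * (Ω * T) by ring, Real.cosh_two_mul]
    have := Real.cosh_sq (Ω * T); linarith
  have d5 : Real.sinh (Ω * (T - t)) =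
      Real.sinh (Ω * T) * Real.cosh (Ω * t) - Real.cosh (Ω * T) * Real.sinh (Ω * t) := by
    rw [show Ω * (T - t) = Ω * T - Ω * t by ring, Real.sinh_sub]
  have cT2 : Real.cosh (Ω * T) ^ 2 = Real.sinh (Ω * T) ^ 2 + 1 := Real.cosh_sq _
  have ct2 : Real.cosh (Ω * t) ^ 2 = Real.sinh (Ω * t) ^ 2 + 1 := Real.cosh_sq _
  rw [d2] at *
  simp only [sub_self, mul_zero, sub_zero, Real.cosh_zero]
  rw [d1, d3, d4, d5]
  field_simp
  linear_combination (2*Real.sinh (Ω*t)*Real.cosh (Ω*t)) * cT2 -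
    (2*Real.cosh (Ω*T)*Real.sinh (Ω*T)) * ct2
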